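/- arXiv:2605.12171 — 4 statements merged into one kernel-verified Lean document; each statement's English description precedes it below -/
import Mathlib

section
/- Let T : {0,1}ⁿ → ℝ be of the form T(x) = u(A₁(x) + ⋯ + A_h(x)), where each Aⱼ is a self-attention head with value-embedding dimension d, and u = P/Q is a rational function on ℝᵈ of degree at most p whose denominator Q is nonzero at every attained head-sum. Then there exist polynomials P̃, Q̃ in n real variables, each of total degree at most 2hp, with Q̃ nonzero on {0,1}ⁿ, such that T(x) = P̃(x)/Q̃(x) for all x ∈ {0,1}ⁿ. -/
/-- The Boolean hypercube `{0,1}ⁿ` inside `ℝⁿ`. -/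
def cube (n : ℕ) : Set (Fin n → ℝ) := {x | ∀ i, x i = 0 ∨ x i = 1}

/-- `A` is a self-attention head on binary inputs of length `n+1` with
value-embedding dimension `d`, reading the query from the last token. -/
def IsAttentionHead {n d : ℕ} (A : (Fin (n + 1) → ℝ) → Fin d → ℝ) : Prop :=
  ∃ (H : Type) (_ : NormedAddCommGroup H) (_ : InnerProductSpace ℝ H)
    (q : ℝ → H) (k : Fin (n + 1) → ℝ → H) (v : Fin (n + 1) → ℝ → Fin d → ℝ),
    ∀ x j, A x j =
      (∑ i, Real.exp (inner ℝ (q (x (Fin.last n))) (k i (x i)) : ℝ) * v i (x i) j) /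
      (∑ i, Real.exp (inner ℝ (q (x (Fin.last n))) (k i (x i)) : ℝ))

open MvPolynomial Finset in
lemma cube_interp {m : ℕ} (i L : Fin m) (f : ℝ → ℝ → ℝ) :
    ∃ g : MvPolynomial (Fin m) ℝ, g.totalDegree ≤ 2 ∧
      ∀ x ∈ cube m, MvPolynomial.eval x g = f (x i) (x L) := by
  refine ⟨C (f 0 0) * ((1 - X i) * (1 - X L)) + C (f 0 1) * ((1 - X i) * X L)
    + C (f 1 0) * (X i * (1 - X L)) + C (f 1 1) * (X i * X L), ?_, ?_⟩
  · have h1 : ∀ s : Fin m, (1 - X s : MvPolynomial (Fin m) ℝ).totalDegree ≤ 1 := by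
      intro s
      refine (totalDegree_sub _ _).trans ?_
      simp [totalDegree_one, totalDegree_X]
    have hX : ∀ s : Fin m, (X s : MvPolynomial (Fin m) ℝ).totalDegree ≤ 1 := by
      intro s; simp [totalDegree_X]
    have key : ∀ (c : ℝ) (a b : MvPolynomial (Fin m) ℝ), a.totalDegree ≤ 1 →
        b.totalDegree ≤ 1 → (C c * (a * b)).totalDegree ≤ 2 := by
      intro c a b ha hb
      calc (C c * (a * b)).totalDegree ≤ (C c).totalDegree + (a * b).totalDegree :=
            totalDegree_mul _ _
        _ ≤ 0 + (a.totalDegree + b.totalDegree) := by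
            gcongr
            · simp [totalDegree_C]
            · exact totalDegree_mul _ _
        _ ≤ 0 + (1 + 1) := by omega
        _ = 2 := by norm_num
    refine (totalDegree_add _ _).trans (max_le ((totalDegree_add _ _).trans (max_le
      ((totalDegree_add _ _).trans (max_le ?_ ?_)) ?_)) ?_) <;>
      [exact key _ _ _ (h1 i) (h1 L); exact key _ _ _ (h1 i) (hX L);
       exact key _ _ _ (hX i) (h1 L); exact key _ _ _ (hX i) (hX L)]
  · intro x hx
    rcases hx i with hi | hi <;> rcases hx L with hL | hL <;> simp [hi, hL]

open MvPolynomial Finset in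
lemma head_repr {n d : ℕ} (A : (Fin (n + 1) → ℝ) → Fin d → ℝ) (hA : IsAttentionHead A) :
    ∃ (D : MvPolynomial (Fin (n + 1)) ℝ) (N : Fin d → MvPolynomial (Fin (n + 1)) ℝ),
      D.totalDegree ≤ 2 ∧ (∀ m, (N m).totalDegree ≤ 2) ∧
      (∀ x ∈ cube (n + 1), 0 < MvPolynomial.eval x D) ∧
      (∀ x ∈ cube (n + 1), ∀ m, A x m = MvPolynomial.eval x (N m) / MvPolynomial.eval x D) := by
  obtain ⟨H, _, _, q, k, v, hAdef⟩ := hA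
  choose e he1 he2 using fun i : Fin (n + 1) =>
    cube_interp i (Fin.last n) (fun a b => Real.exp (inner ℝ (q b) (k i a) : ℝ))
  choose f hf1 hf2 using fun (i : Fin (n + 1)) (m : Fin d) =>
    cube_interp i (Fin.last n) (fun a b => Real.exp (inner ℝ (q b) (k i a) : ℝ) * v i a m)
  refine ⟨∑ i, e i, fun m => ∑ i, f i m, ?_, ?_, ?_, ?_⟩
  · exact totalDegree_finsetSum_le fun i _ => he1 i
  · exact fun m => totalDegree_finsetSum_le fun i _ => hf1 i m
  · intro x hx
    rw [map_sum]
    have : ∀ i : Fin (n + 1), MvPolynomial.eval x (e i) =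
        Real.exp (inner ℝ (q (x (Fin.last n))) (k i (x i)) : ℝ) := fun i => he2 i x hx
    simp only [this]
    exact Finset.sum_pos (fun i _ => Real.exp_pos _) univ_nonempty
  · intro x hx m
    rw [hAdef, map_sum, map_sum]
    congr 1
    · exact Finset.sum_congr rfl fun i _ => (hf2 i m x hx).symm
    · exact Finset.sum_congr rfl fun i _ => (he2 i x hx).symm


open MvPolynomial Finset in
lemma subst_poly {d ν p k : ℕ} (P : MvPolynomial (Fin d) ℝ) (hP : P.totalDegree ≤ p)
    (M : Fin d → MvPolynomial (Fin ν) ℝ) (D : MvPolynomial (Fin ν) ℝ)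
    (hM : ∀ m, (M m).totalDegree ≤ k) (hD : D.totalDegree ≤ k) :
    ∃ Ph : MvPolynomial (Fin ν) ℝ, Ph.totalDegree ≤ k * p ∧
      ∀ x : Fin ν → ℝ, MvPolynomial.eval x D ≠ 0 →
        MvPolynomial.eval x Ph = (MvPolynomial.eval x D) ^ p *
          MvPolynomial.eval (fun m => MvPolynomial.eval x (M m) / MvPolynomial.eval x D) P := by
  classical
  have hsum : ∀ α ∈ P.support, (∑ m, α m) ≤ p := by
    intro α hα
    have h1 : α.sum (fun _ e => e) ≤ P.totalDegree := le_totalDegree hα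
    have h2 : α.sum (fun _ e => e) = ∑ m, α m := Finsupp.sum_fintype _ _ (fun _ => rfl)
    omega
  refine ⟨∑ α ∈ P.support, C (P.coeff α) * (∏ m, M m ^ α m) * D ^ (p - ∑ m, α m), ?_, ?_⟩
  · refine totalDegree_finsetSum_le fun α hα => ?_
    calc (C (P.coeff α) * (∏ m, M m ^ α m) * D ^ (p - ∑ m, α m)).totalDegree
        ≤ (C (P.coeff α) * (∏ m, M m ^ α m)).totalDegree + (D ^ (p - ∑ m, α m)).totalDegree :=
          totalDegree_mul _ _
      _ ≤ ((C (P.coeff α)).totalDegree + (∏ m, M m ^ α m).totalDegree)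
            + (p - ∑ m, α m) * D.totalDegree := by
          gcongr
          · exact totalDegree_mul _ _
          · exact totalDegree_pow _ _
      _ ≤ (0 + ∑ m, (α m) * k) + (p - ∑ m, α m) * k := by
          gcongr
          · simp [totalDegree_C]
          · refine (totalDegree_finset_prod _ _).trans (Finset.sum_le_sum fun m _ => ?_)
            exact (totalDegree_pow _ _).trans (Nat.mul_le_mul_left _ (hM m))
      _ = (∑ m, α m) * k + (p - ∑ m, α m) * k := by rw [zero_add, Finset.sum_mul]
      _ ≤ k * p := by
          rcases le_or_gt (∑ m, α m) p with hle | hlt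
          · rw [← add_mul]; nlinarith [Nat.sub_add_cancel hle]
          · have := hsum α hα; omega
  · intro x hx0
    rw [map_sum, eval_eq' (fun m => MvPolynomial.eval x (M m) / MvPolynomial.eval x D) P,
      Finset.mul_sum]
    refine Finset.sum_congr rfl fun α hα => ?_
    have hs := hsum α hα
    rw [map_mul, map_mul, eval_C, map_pow, map_prod]
    simp only [map_pow]
    have hprod : (∏ m, (MvPolynomial.eval x (M m) / MvPolynomial.eval x D) ^ α m)
        = (∏ m, MvPolynomial.eval x (M m) ^ α m) / (MvPolynomial.eval x D) ^ (∑ m, α m) := by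
      rw [← Finset.prod_pow_eq_pow_sum, ← Finset.prod_div_distrib]
      exact Finset.prod_congr rfl fun m _ => div_pow _ _ _
    rw [hprod]
    have hp' : p = (p - ∑ m, α m) + ∑ m, α m := by omega
    rw [hp', pow_add]
    have hne : (MvPolynomial.eval x D) ^ (∑ m, α m) ≠ 0 := pow_ne_zero _ hx0
    simp only [Nat.add_sub_cancel]
    field_simp


open MvPolynomial Finset in
theorem stmt_7 (n d h p : ℕ) (A : Fin h → (Fin (n + 1) → ℝ) → Fin d → ℝ)
    (hA : ∀ j, IsAttentionHead (A j))
    (P Q : MvPolynomial (Fin d) ℝ)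
    (hP : P.totalDegree ≤ p) (hQ : Q.totalDegree ≤ p)
    (hQne : ∀ x ∈ cube (n + 1), MvPolynomial.eval (∑ j, A j x) Q ≠ 0)
    (T : (Fin (n + 1) → ℝ) → ℝ)
    (hT : ∀ x ∈ cube (n + 1),
      T x = MvPolynomial.eval (∑ j, A j x) P / MvPolynomial.eval (∑ j, A j x) Q) :
    ∃ P' Q' : MvPolynomial (Fin (n + 1)) ℝ,
      P'.totalDegree ≤ 2 * h * p ∧ Q'.totalDegree ≤ 2 * h * p ∧
      (∀ x ∈ cube (n + 1), MvPolynomial.eval x Q' ≠ 0) ∧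
      ∀ x ∈ cube (n + 1), T x = MvPolynomial.eval x P' / MvPolynomial.eval x Q' := by
  classical
  choose Dh Nh hDdeg hNdeg hDpos hrepr using fun j => head_repr (A j) (hA j)
  set DD : MvPolynomial (Fin (n + 1)) ℝ := ∏ j, Dh j with hDD
  set Mm : Fin d → MvPolynomial (Fin (n + 1)) ℝ :=
    fun m => ∑ j, Nh j m * ∏ j' ∈ Finset.univ.erase j, Dh j' with hMm
  have hDDdeg : DD.totalDegree ≤ 2 * h := by
    refine (totalDegree_finset_prod _ _).trans ?_
    calc ∑ j, (Dh j).totalDegree ≤ ∑ _j : Fin h, 2 := Finset.sum_le_sum fun j _ => hDdeg j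
      _ = 2 * h := by simp [mul_comm]
  have hMmdeg : ∀ m, (Mm m).totalDegree ≤ 2 * h := by
    intro m
    refine totalDegree_finsetSum_le fun j _ => ?_
    calc (Nh j m * ∏ j' ∈ Finset.univ.erase j, Dh j').totalDegree
        ≤ (Nh j m).totalDegree + (∏ j' ∈ Finset.univ.erase j, Dh j').totalDegree :=
          totalDegree_mul _ _
      _ ≤ 2 + ∑ j' ∈ Finset.univ.erase j, (Dh j').totalDegree := by
          gcongr
          exacts [hNdeg j m, totalDegree_finset_prod _ _]
      _ ≤ 2 + ∑ _j' ∈ Finset.univ.erase j, 2 := by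
          gcongr with j' _; exact hDdeg j'
      _ ≤ 2 * h := by
          have hcard : (Finset.univ.erase j).card = h - 1 := by
            simp [Finset.card_erase_of_mem]
          have hh : 1 ≤ h := Nat.one_le_iff_ne_zero.mpr (by
            rintro rfl; exact absurd j.2 (by omega))
          simp [Finset.sum_const, hcard]
          omega
  have hDDpos : ∀ x ∈ cube (n + 1), 0 < MvPolynomial.eval x DD := by
    intro x hx
    rw [hDD, map_prod]
    exact Finset.prod_pos fun j _ => hDpos j x hx
  have hkey : ∀ x ∈ cube (n + 1), ∀ m : Fin d,
      (∑ j, A j x) m = MvPolynomial.eval x (Mm m) / MvPolynomial.eval x DD := by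
    intro x hx m
    have hDDne : MvPolynomial.eval x DD ≠ 0 := (hDDpos x hx).ne'
    rw [hMm]
    simp only [map_sum, map_mul, map_prod]
    rw [Finset.sum_div, Finset.sum_apply]
    refine Finset.sum_congr rfl fun j _ => ?_
    rw [hrepr j x hx m]
    have hDjne : MvPolynomial.eval x (Dh j) ≠ 0 := (hDpos j x hx).ne'
    rw [div_eq_div_iff hDjne hDDne, hDD, map_prod]
    rw [← Finset.prod_erase_mul Finset.univ (fun j' => MvPolynomial.eval x (Dh j'))
      (Finset.mem_univ j)]
    ring
  obtain ⟨Ph, hPhdeg, hPheval⟩ := subst_poly (k := 2 * h) P hP Mm DD hMmdeg hDDdeg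
  obtain ⟨Qh, hQhdeg, hQheval⟩ := subst_poly (k := 2 * h) Q hQ Mm DD hMmdeg hDDdeg
  have hfun : ∀ x ∈ cube (n + 1),
      (fun m => MvPolynomial.eval x (Mm m) / MvPolynomial.eval x DD) = ∑ j, A j x := by
    intro x hx
    funext m
    exact (hkey x hx m).symm
  refine ⟨Ph, Qh, by omega, by omega, ?_, ?_⟩
  · intro x hx
    have hDDne : MvPolynomial.eval x DD ≠ 0 := (hDDpos x hx).ne'
    rw [hQheval x hDDne, hfun x hx]
    exact mul_ne_zero (pow_ne_zero _ hDDne) (hQne x hx)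
  · intro x hx
    have hDDne : MvPolynomial.eval x DD ≠ 0 := (hDDpos x hx).ne'
    rw [hT x hx, hPheval x hDDne, hQheval x hDDne, hfun x hx,
      mul_div_mul_left _ _ (pow_ne_zero p hDDne)]
end

section
/- Suppose every rational function P/Q (with Q nonzero on {0,1}ⁿ) that sign-represents the parity function on n bits satisfies deg(P) + deg(Q) ≥ n. Let T be a self-attention layer with h heads and value-embedding dimension d post-processed by a rational function of degree at most p, with denominator nonzero on all attained head-sums. If T sign-represents parity on {0,1}ⁿ, then h·p ≥ n/4. -/
open scoped Classical

/-- Parity of a point of the cube: its Hamming weight is odd. -/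
noncomputable def parity {n : ℕ} (x : Fin n → ℝ) : Prop :=
  Odd (Finset.univ.filter fun i => x i = 1).card

/-- `f` sign-represents `g` on the cube. -/
def SignRep {n : ℕ} (f : (Fin n → ℝ) → ℝ) (g : (Fin n → ℝ) → Prop) : Prop :=
  ∀ x ∈ cube n, (0 < f x ↔ g x)

open MvPolynomial in
/-- Two-variable multilinear interpolation on the cube. -/
lemma interp2 {m : ℕ} (i j : Fin m) (g : ℝ → ℝ → ℝ) :
    ∃ E : MvPolynomial (Fin m) ℝ, E.totalDegree ≤ 2 ∧
      ∀ x ∈ cube m, MvPolynomial.eval x E = g (x i) (x j) := by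
  refine ⟨C (g 0 0) + C (g 1 0 - g 0 0) * X i + C (g 0 1 - g 0 0) * X j
      + C (g 1 1 - g 1 0 - g 0 1 + g 0 0) * (X i * X j), ?_, ?_⟩
  · have hX : ∀ a : Fin m, (X a : MvPolynomial (Fin m) ℝ).totalDegree ≤ 1 :=
      fun a => le_of_eq (totalDegree_X a)
    have hCX : ∀ (c : ℝ) (a : Fin m), (C c * X a).totalDegree ≤ 2 := by
      intro c a
      refine (totalDegree_mul _ _).trans ?_
      simp [totalDegree_C, totalDegree_X]
    refine (totalDegree_add _ _).trans (max_le ((totalDegree_add _ _).trans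
      (max_le ((totalDegree_add _ _).trans (max_le ?_ (hCX _ _))) (hCX _ _))) ?_)
    · simp [totalDegree_C]
    · refine (totalDegree_mul _ _).trans ?_
      have := (totalDegree_mul (X i) (X j)).trans (add_le_add (hX i) (hX j))
      simp only [totalDegree_C, zero_add]
      exact this
  · intro x hx
    rcases hx i with hi | hi <;> rcases hx j with hj | hj <;>
      simp [hi, hj] <;> ring

open MvPolynomial in
/-- Each attention head is, on the cube, a ratio of polynomials of degree `≤ 2`
with positive denominator. -/
lemma headRat {n d : ℕ} (A : (Fin (n + 1) → ℝ) → Fin d → ℝ) (hA : IsAttentionHead A) :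
    ∃ (N : Fin d → MvPolynomial (Fin (n + 1)) ℝ) (D : MvPolynomial (Fin (n + 1)) ℝ),
      D.totalDegree ≤ 2 ∧ (∀ k, (N k).totalDegree ≤ 2) ∧
      ∀ x ∈ cube (n + 1), 0 < eval x D ∧
        ∀ k, A x k = eval x (N k) / eval x D := by
  obtain ⟨H, _, _, q, kk, v, hA⟩ := hA
  choose E hEdeg hEval using fun i : Fin (n + 1) =>
    interp2 i (Fin.last n) (fun a b => Real.exp (inner ℝ (q b) (kk i a) : ℝ))
  choose F hFdeg hFval using fun (ik : Fin (n + 1) × Fin d) =>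
    interp2 ik.1 (Fin.last n)
      (fun a b => Real.exp (inner ℝ (q b) (kk ik.1 a) : ℝ) * v ik.1 a ik.2)
  refine ⟨fun k => ∑ i, F (i, k), ∑ i, E i, ?_, ?_, ?_⟩
  · exact (totalDegree_finset_sum _ _).trans (Finset.sup_le fun i _ => hEdeg i)
  · intro k
    exact (totalDegree_finset_sum _ _).trans (Finset.sup_le fun i _ => hFdeg (i, k))
  · intro x hx
    have hD : eval x (∑ i, E i) =
        ∑ i, Real.exp (inner ℝ (q (x (Fin.last n))) (kk i (x i)) : ℝ) := by
      rw [map_sum]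
      exact Finset.sum_congr rfl fun i _ => hEval i x hx
    have hDpos : 0 < eval x (∑ i, E i) := by
      rw [hD]
      exact Finset.sum_pos (fun i _ => Real.exp_pos _) ⟨0, Finset.mem_univ 0⟩
    refine ⟨hDpos, fun k => ?_⟩
    rw [hA x k, hD]
    congr 1
    rw [map_sum]
    exact (Finset.sum_congr rfl fun i _ => hFval (i, k) x hx).symm

open MvPolynomial in
/-- Clearing denominators: composing a degree-`≤ p` polynomial with a tuple of
rational functions with common denominator of degree `≤ e`. -/
lemma clearDenom {d m p e : ℕ} (P : MvPolynomial (Fin d) ℝ) (hP : P.totalDegree ≤ p)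
    (N : Fin d → MvPolynomial (Fin m) ℝ) (D : MvPolynomial (Fin m) ℝ)
    (hN : ∀ k, (N k).totalDegree ≤ e) (hD : D.totalDegree ≤ e) :
    ∃ R : MvPolynomial (Fin m) ℝ, R.totalDegree ≤ e * p ∧
      ∀ x : Fin m → ℝ, eval x D ≠ 0 →
        eval x R = (eval x D) ^ p *
          eval (fun k => eval x (N k) / eval x D) P := by
  classical
  have hdeg : ∀ s ∈ P.support, (∑ k, s k) ≤ p := by
    intro s hs
    have h1 : (s.sum fun _ e => e) ≤ P.totalDegree := le_totalDegree hs
    have h2 : (s.sum fun _ e => e) = ∑ k, s k := Finsupp.sum_fintype _ _ (fun _ => rfl)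
    omega
  refine ⟨∑ s ∈ P.support,
      C (coeff s P) * D ^ (p - ∑ k, s k) * ∏ k, (N k) ^ (s k), ?_, ?_⟩
  · refine (totalDegree_finset_sum _ _).trans (Finset.sup_le fun s hs => ?_)
    have h1 : (C (coeff s P) * D ^ (p - ∑ k, s k) * ∏ k, (N k) ^ (s k)).totalDegree ≤
        0 + (p - ∑ k, s k) * e + ∑ k, (s k) * e := by
      refine (totalDegree_mul _ _).trans (add_le_add ((totalDegree_mul _ _).trans
        (add_le_add (le_of_eq (totalDegree_C _))
          ((totalDegree_pow _ _).trans (Nat.mul_le_mul_left _ hD)))) ?_)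
      refine (totalDegree_finset_prod _ _).trans (Finset.sum_le_sum fun k _ => ?_)
      exact (totalDegree_pow _ _).trans (Nat.mul_le_mul_left _ (hN k))
    refine h1.trans ?_
    rw [zero_add, ← Finset.sum_mul, ← add_mul, Nat.sub_add_cancel (hdeg s hs),
      Nat.mul_comm]
  · intro x hx
    rw [map_sum, eval_eq' _ P, Finset.mul_sum]
    refine Finset.sum_congr rfl fun s hs => ?_
    simp only [map_mul, eval_C, map_pow, map_prod]
    have hsle := hdeg s hs
    rw [pow_sub₀ _ hx hsle]
    have hprod : ∏ k, (eval x (N k) / eval x D) ^ s k =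
        (∏ k, eval x (N k) ^ s k) / (eval x D) ^ (∑ k, s k) := by
      rw [← Finset.prod_pow_eq_pow_sum, ← Finset.prod_div_distrib]
      exact Finset.prod_congr rfl fun k _ => div_pow _ _ _
    rw [hprod]
    have hDs : (eval x D) ^ (∑ k, s k) ≠ 0 := pow_ne_zero _ hx
    field_simp

theorem stmt_10 (n d h p : ℕ)
    -- Paturi–Saks degree lower bound for rational sign-representations of parity:
    (hPS : ∀ P Q : MvPolynomial (Fin (n + 1)) ℝ,
      (∀ x ∈ cube (n + 1), MvPolynomial.eval x Q ≠ 0) →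
      SignRep (fun x => MvPolynomial.eval x P / MvPolynomial.eval x Q) parity →
      n + 1 ≤ P.totalDegree + Q.totalDegree)
    (A : Fin h → (Fin (n + 1) → ℝ) → Fin d → ℝ)
    (hA : ∀ j, IsAttentionHead (A j))
    (P Q : MvPolynomial (Fin d) ℝ)
    (hP : P.totalDegree ≤ p) (hQ : Q.totalDegree ≤ p)
    (hQne : ∀ x ∈ cube (n + 1), MvPolynomial.eval (∑ j, A j x) Q ≠ 0)
    (T : (Fin (n + 1) → ℝ) → ℝ)
    (hT : ∀ x ∈ cube (n + 1),
      T x = MvPolynomial.eval (∑ j, A j x) P / MvPolynomial.eval (∑ j, A j x) Q)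
    (hrep : SignRep T parity) :
    ((n : ℝ) + 1) / 4 ≤ (h : ℝ) * p := by
  classical
  choose N D hDdeg hNdeg hcube using fun j => headRat (A j) (hA j)
  set DD : MvPolynomial (Fin (n + 1)) ℝ := ∏ j, D j with hDD
  set NN : Fin d → MvPolynomial (Fin (n + 1)) ℝ :=
    fun k => ∑ j, N j k * ∏ j' ∈ Finset.univ.erase j, D j' with hNN
  have hDDdeg : DD.totalDegree ≤ 2 * h := by
    refine (MvPolynomial.totalDegree_finset_prod _ _).trans ?_
    calc ∑ j : Fin h, (D j).totalDegree ≤ ∑ _j : Fin h, 2 :=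
          Finset.sum_le_sum fun j _ => hDdeg j
      _ = 2 * h := by simp [Finset.sum_const, Nat.mul_comm]
  have hNNdeg : ∀ k, (NN k).totalDegree ≤ 2 * h := by
    intro k
    refine (MvPolynomial.totalDegree_finset_sum _ _).trans
      (Finset.sup_le fun j _ => ?_)
    have h1 : (∏ j' ∈ Finset.univ.erase j, D j').totalDegree ≤ 2 * (h - 1) := by
      refine (MvPolynomial.totalDegree_finset_prod _ _).trans ?_
      calc ∑ j' ∈ Finset.univ.erase j, (D j').totalDegree
          ≤ ∑ _j' ∈ Finset.univ.erase j, 2 := Finset.sum_le_sum fun j' _ => hDdeg j'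
        _ = 2 * (h - 1) := by
            simp [Finset.sum_const, Finset.card_erase_of_mem, Nat.mul_comm]
    have hh : 1 ≤ h := by
      rcases Nat.eq_zero_or_pos h with h0 | h0
      · exact absurd j.2 (by omega)
      · exact h0
    have := (MvPolynomial.totalDegree_mul _ _).trans (add_le_add (hNdeg j k) h1)
    omega
  have hDDpos : ∀ x ∈ cube (n + 1), 0 < MvPolynomial.eval x DD := by
    intro x hx
    rw [hDD, map_prod]
    exact Finset.prod_pos fun j _ => (hcube j x hx).1
  have hsum : ∀ x ∈ cube (n + 1), ∀ k,
      (∑ j, A j x) k = MvPolynomial.eval x (NN k) / MvPolynomial.eval x DD := by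
    intro x hx k
    rw [Finset.sum_apply, hNN]
    simp only [map_sum, map_mul, map_prod]
    rw [Finset.sum_div]
    refine Finset.sum_congr rfl fun j _ => ?_
    have hrest : 0 < ∏ j' ∈ Finset.univ.erase j, MvPolynomial.eval x (D j') :=
      Finset.prod_pos fun j' _ => (hcube j' x hx).1
    rw [(hcube j x hx).2 k, hDD, map_prod,
      ← Finset.mul_prod_erase Finset.univ _ (Finset.mem_univ j),
      mul_div_mul_right _ _ (ne_of_gt hrest)]
  obtain ⟨Phat, hPhatdeg, hPhat⟩ := clearDenom P hP NN DD hNNdeg hDDdeg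
  obtain ⟨Qhat, hQhatdeg, hQhat⟩ := clearDenom Q hQ NN DD hNNdeg hDDdeg
  have key : ∀ x ∈ cube (n + 1),
      MvPolynomial.eval x Phat = (MvPolynomial.eval x DD) ^ p *
          MvPolynomial.eval (∑ j, A j x) P ∧
      MvPolynomial.eval x Qhat = (MvPolynomial.eval x DD) ^ p *
          MvPolynomial.eval (∑ j, A j x) Q := by
    intro x hx
    have hne := ne_of_gt (hDDpos x hx)
    have hS : (fun k => MvPolynomial.eval x (NN k) / MvPolynomial.eval x DD) =
        ∑ j, A j x := by
      funext k
      exact (hsum x hx k).symm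
    constructor
    · rw [hPhat x hne, hS]
    · rw [hQhat x hne, hS]
  have hQhatne : ∀ x ∈ cube (n + 1), MvPolynomial.eval x Qhat ≠ 0 := by
    intro x hx
    rw [(key x hx).2]
    exact mul_ne_zero (pow_ne_zero _ (ne_of_gt (hDDpos x hx))) (hQne x hx)
  have hsr : SignRep (fun x => MvPolynomial.eval x Phat / MvPolynomial.eval x Qhat)
      parity := by
    intro x hx
    have hpow : (0:ℝ) < (MvPolynomial.eval x DD) ^ p := pow_pos (hDDpos x hx) p
    dsimp only
    rw [(key x hx).1, (key x hx).2, mul_div_mul_left _ _ (ne_of_gt hpow)]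
    rw [← hT x hx]
    exact hrep x hx
  have hfin : n + 1 ≤ 4 * (h * p) := by
    have := hPS Phat Qhat hQhatne hsr
    have h4 : Phat.totalDegree + Qhat.totalDegree ≤ 4 * (h * p) :=
      (add_le_add hPhatdeg hQhatdeg).trans (le_of_eq (by ring))
    exact this.trans h4
  have : ((n : ℝ) + 1) ≤ 4 * ((h : ℝ) * p) := by
    have := Nat.cast_le (α := ℝ) |>.2 hfin
    push_cast at this
    linarith
  linarith
end

section
/- Assume: (i) every self-attention layer with h heads post-processed by a rational function of degree at most p that sign-represents parity on n bits satisfies hp ≥ n/4; (ii) for every ε ∈ (0,1], every function u : [−1,1]ᵈ → ℝ computed by a normalized ReLU network of width m and depth ℓ admits a rational function v of degree at most (C/4)·m^ℓ·(ln(ℓ/ε))^{2ℓ} with sup-distance at most ε from u on [−1,1]ᵈ. Then, if T(x) = u(A₁(x)+⋯+A_h(x)) with head-sums in [−1,1]ᵈ (τ,γ)-represents parity with γ ∈ (0,1], it follows that h·m^ℓ·(ln(2ℓ/γ))^{2ℓ} ≥ n/C. -/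
open scoped Classical

/-- The box `[-1,1]ᵈ` inside `ℝᵈ`. -/
def box (d : ℕ) : Set (Fin d → ℝ) := {y | ∀ k, y k ∈ Set.Icc (-1 : ℝ) 1}

/-- A single normalized ReLU layer: each gate computes `z ↦ max 0 (aᵀz + b)`
with `‖a‖₁ + |b| ≤ 1`. -/
def IsReLULayer (k₁ k₂ : ℕ) (f : (Fin k₁ → ℝ) → Fin k₂ → ℝ) : Prop :=
  ∃ (a : Fin k₂ → Fin k₁ → ℝ) (b : Fin k₂ → ℝ),
    (∀ j, (∑ i, |a j i|) + |b j| ≤ 1) ∧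
    ∀ z j, f z j = max 0 ((∑ i, a j i * z i) + b j)

/-- `u` is computed by a normalized ReLU network of width `m` and depth `ℓ`
(with a final linear readout). -/
def IsReLUNet (m : ℕ) : (ℓ : ℕ) → (d : ℕ) → ((Fin d → ℝ) → ℝ) → Prop
  | 0, d, u => ∃ (a : Fin d → ℝ) (b : ℝ), ∀ z, u z = (∑ i, a i * z i) + b
  | ℓ + 1, d, u => ∃ k : ℕ, k ≤ m ∧ ∃ f : (Fin d → ℝ) → Fin k → ℝ,
      IsReLULayer d k f ∧ ∃ w : (Fin k → ℝ) → ℝ, IsReLUNet m ℓ k w ∧ ∀ z, u z = w (f z)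

theorem stmt_14 (C : ℝ) (hC : 0 < C) (n d h m ℓ : ℕ)
    -- (i) the rational-degree lower bound for sign-representing parity:
    (hi : ∀ (n' d' h' p' : ℕ) (A : Fin h' → (Fin (n' + 1) → ℝ) → Fin d' → ℝ),
      (∀ j, IsAttentionHead (A j)) →
      ∀ P Q : MvPolynomial (Fin d') ℝ, P.totalDegree ≤ p' → Q.totalDegree ≤ p' →
      (∀ x ∈ cube (n' + 1), MvPolynomial.eval (∑ j, A j x) Q ≠ 0) →
      ∀ T : (Fin (n' + 1) → ℝ) → ℝ,
      (∀ x ∈ cube (n' + 1),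
        T x = MvPolynomial.eval (∑ j, A j x) P / MvPolynomial.eval (∑ j, A j x) Q) →
      SignRep T parity → ((n' : ℝ) + 1) / 4 ≤ (h' : ℝ) * p')
    -- (ii) rational approximation of normalized ReLU networks:
    (hii : ∀ ε ∈ Set.Ioc (0 : ℝ) 1, ∀ (d' : ℕ) (u : (Fin d' → ℝ) → ℝ),
      IsReLUNet m ℓ d' u →
      ∃ (p' : ℕ) (P Q : MvPolynomial (Fin d') ℝ),
        P.totalDegree ≤ p' ∧ Q.totalDegree ≤ p' ∧
        (p' : ℝ) ≤ C / 4 * (m : ℝ) ^ ℓ * (Real.log ((ℓ : ℝ) / ε)) ^ (2 * ℓ) ∧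
        (∀ y ∈ box d', MvPolynomial.eval y Q ≠ 0) ∧
        ∀ y ∈ box d', |u y - MvPolynomial.eval y P / MvPolynomial.eval y Q| ≤ ε)
    (A : Fin h → (Fin (n + 1) → ℝ) → Fin d → ℝ)
    (hA : ∀ j, IsAttentionHead (A j))
    (hbox : ∀ x ∈ cube (n + 1), (∑ j, A j x) ∈ box d)
    (u : (Fin d → ℝ) → ℝ) (hu : IsReLUNet m ℓ d u)
    (T : (Fin (n + 1) → ℝ) → ℝ) (hT : ∀ x, T x = u (∑ j, A j x))
    (τ γ : ℝ) (hγ : γ ∈ Set.Ioc (0 : ℝ) 1)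
    (hrep1 : ∀ x ∈ cube (n + 1), parity x → τ + γ ≤ T x)
    (hrep0 : ∀ x ∈ cube (n + 1), ¬ parity x → T x ≤ τ - γ) :
    ((n : ℝ) + 1) / C ≤ (h : ℝ) * (m : ℝ) ^ ℓ * (Real.log (2 * (ℓ : ℝ) / γ)) ^ (2 * ℓ) := by
  obtain ⟨hγ0, hγ1⟩ := hγ
  have hε : γ / 2 ∈ Set.Ioc (0 : ℝ) 1 := ⟨by linarith, by linarith⟩
  obtain ⟨p', P, Q, hP, hQ, hpbound, hQne, happrox⟩ := hii (γ / 2) hε d u hu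
  -- shifted numerator
  set P' : MvPolynomial (Fin d) ℝ := P - MvPolynomial.C τ * Q with hP'def
  have hP'deg : P'.totalDegree ≤ p' := by
    refine le_trans (MvPolynomial.totalDegree_sub P _) (max_le hP ?_)
    calc (MvPolynomial.C τ * Q).totalDegree
        ≤ (MvPolynomial.C τ).totalDegree + Q.totalDegree := MvPolynomial.totalDegree_mul _ _
      _ ≤ p' := by simpa [MvPolynomial.totalDegree_C] using hQ
  have hQcube : ∀ x ∈ cube (n + 1), MvPolynomial.eval (∑ j, A j x) Q ≠ 0 :=
    fun x hx => hQne _ (hbox x hx)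
  set T' : (Fin (n + 1) → ℝ) → ℝ := fun x =>
    MvPolynomial.eval (∑ j, A j x) P' / MvPolynomial.eval (∑ j, A j x) Q with hT'def
  have hevalP' : ∀ x ∈ cube (n + 1),
      T' x = MvPolynomial.eval (∑ j, A j x) P / MvPolynomial.eval (∑ j, A j x) Q - τ := by
    intro x hx
    have hq := hQcube x hx
    simp only [hT'def, hP'def, map_sub, map_mul, MvPolynomial.eval_C]
    field_simp
  have hsign : SignRep T' parity := by
    intro x hx
    have hy := hbox x hx
    have herr := happrox _ hy
    have hq := hQcube x hx
    have hTx : T x = u (∑ j, A j x) := hT x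
    have hT'x := hevalP' x hx
    rw [abs_le] at herr
    by_cases hp : parity x
    · have h1 := hrep1 x hx hp
      constructor
      · intro _; exact hp
      · intro _
        rw [hT'x]; rw [hTx] at h1; linarith [herr.1]
    · have h0 := hrep0 x hx hp
      constructor
      · intro hpos
        exfalso
        rw [hT'x] at hpos; rw [hTx] at h0; linarith [herr.2]
      · intro hpp; exact absurd hpp hp
  have hlow := hi n d h p' A hA P' Q hP'deg hQ hQcube T' (fun x _ => rfl) hsign
  have hlog : Real.log ((ℓ : ℝ) / (γ / 2)) = Real.log (2 * (ℓ : ℝ) / γ) := by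
    congr 1
    field_simp
  rw [hlog] at hpbound
  have hh : (0 : ℝ) ≤ (h : ℝ) := Nat.cast_nonneg h
  have h2 : ((n : ℝ) + 1) / 4 ≤ (h : ℝ) * (C / 4 * (m : ℝ) ^ ℓ * (Real.log (2 * (ℓ : ℝ) / γ)) ^ (2 * ℓ)) :=
    le_trans hlow (mul_le_mul_of_nonneg_left hpbound hh)
  rw [div_le_iff₀ hC]
  nlinarith [h2]
end

section
/- Suppose every degree-k polynomial threshold function on {0,1}ⁿ has average sensitivity at most s(k, n). Then for T a self-attention layer with h heads post-processed by a rational function of degree at most p (denominator nonzero on attained head-sums), the Boolean function sign(T) has average sensitivity at most s(4hp, n). -/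
open scoped Classical

/-- Embed Boolean vectors into `ℝⁿ`. -/
def toReal {n : ℕ} (x : Fin n → Bool) : Fin n → ℝ := fun i => if x i then 1 else 0

/-- Average sensitivity of a Boolean function: the expected number of coordinates
whose flip changes the value, under the uniform distribution. -/
noncomputable def avgSens {n : ℕ} (f : (Fin n → Bool) → Prop) : ℝ :=
  (∑ x : Fin n → Bool,
    ((Finset.univ.filter fun i => ¬ (f (Function.update x i (!x i)) ↔ f x)).card : ℝ))
    / 2 ^ n

/-- `f` is a polynomial threshold function of degree at most `k`. -/
def IsPTF {n : ℕ} (k : ℕ) (f : (Fin n → Bool) → Prop) : Prop :=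
  ∃ P : MvPolynomial (Fin n) ℝ, P.totalDegree ≤ k ∧
    ∀ x, (f x ↔ 0 < MvPolynomial.eval (toReal x) P)

/-- `g` is computed on Boolean inputs by a polynomial of total degree at most `k`. -/
def PF (n k : ℕ) (g : (Fin n → Bool) → ℝ) : Prop :=
  ∃ R : MvPolynomial (Fin n) ℝ, R.totalDegree ≤ k ∧
    ∀ x, g x = MvPolynomial.eval (toReal x) R

namespace PF

lemma mono {n k l : ℕ} {g} (hkl : k ≤ l) (h : PF n k g) : PF n l g :=
  let ⟨R, hR, he⟩ := h; ⟨R, hR.trans hkl, he⟩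

lemma congr {n k : ℕ} {g g'} (h : PF n k g) (hgg : ∀ x, g x = g' x) : PF n k g' :=
  let ⟨R, hR, he⟩ := h; ⟨R, hR, fun x => (hgg x).symm.trans (he x)⟩

lemma const (n : ℕ) (c : ℝ) : PF n 0 (fun _ => c) :=
  ⟨MvPolynomial.C c, by simp, fun x => by simp⟩

lemma Xvar (n : ℕ) (i : Fin n) : PF n 1 (fun x => if x i then 1 else 0) :=
  ⟨MvPolynomial.X i, by simp, fun x => by simp [toReal]⟩

lemma add {n k : ℕ} {g g'} (h : PF n k g) (h' : PF n k g') :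
    PF n k (fun x => g x + g' x) := by
  obtain ⟨R, hR, he⟩ := h
  obtain ⟨R', hR', he'⟩ := h'
  exact ⟨R + R', le_trans (MvPolynomial.totalDegree_add R R') (max_le hR hR'),
    fun x => by simp [he x, he' x]⟩

lemma mul {n k l : ℕ} {g g'} (h : PF n k g) (h' : PF n l g') :
    PF n (k + l) (fun x => g x * g' x) := by
  obtain ⟨R, hR, he⟩ := h
  obtain ⟨R', hR', he'⟩ := h'
  exact ⟨R * R', le_trans (MvPolynomial.totalDegree_mul R R') (add_le_add hR hR'),
    fun x => by simp [he x, he' x]⟩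

lemma sum {n k : ℕ} {ι : Type*} (s : Finset ι) (f : ι → (Fin n → Bool) → ℝ)
    (h : ∀ j ∈ s, PF n k (f j)) : PF n k (fun x => ∑ j ∈ s, f j x) := by
  induction s using Finset.cons_induction with
  | empty => exact (const n 0).mono (Nat.zero_le k) |>.congr (fun x => by simp)
  | cons a s ha ih =>
      have := (h a (Finset.mem_cons_self a s)).add
        (ih (fun j hj => h j (Finset.mem_cons_of_mem hj)))
      exact this.congr (fun x => by rw [Finset.sum_cons])

lemma prodDeg {n : ℕ} {ι : Type*} (s : Finset ι) (e : ι → ℕ) (f : ι → (Fin n → Bool) → ℝ)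
    (h : ∀ j ∈ s, PF n (e j) (f j)) : PF n (∑ j ∈ s, e j) (fun x => ∏ j ∈ s, f j x) := by
  induction s using Finset.cons_induction with
  | empty => exact (const n 1).mono (by simp) |>.congr (fun x => by simp)
  | cons a s ha ih =>
      have := (h a (Finset.mem_cons_self a s)).mul
        (ih (fun j hj => h j (Finset.mem_cons_of_mem hj)))
      refine (this.congr (fun x => by rw [Finset.prod_cons])).mono (le_of_eq ?_)
      rw [Finset.sum_cons]

lemma pow {n k : ℕ} {g} (h : PF n k g) (m : ℕ) : PF n (m * k) (fun x => g x ^ m) := by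
  have := prodDeg (Finset.range m) (fun _ => k) (fun _ => g) (fun j _ => h)
  refine (this.congr (fun x => by simp)).mono (le_of_eq ?_) |>.congr (fun x => rfl)
  simp [Finset.sum_const, mul_comm]

lemma two {n : ℕ} (i1 i2 : Fin n) (F : Bool → Bool → ℝ) :
    PF n 2 (fun x => F (x i1) (x i2)) := by
  have hu := Xvar n i1
  have hv := Xvar n i2
  have hnu : PF n 1 (fun x => 1 - (if x i1 then (1:ℝ) else 0)) := by
    have := ((const n 1).mono (Nat.zero_le 1)).add (((const n (-1)).mul hu).mono (by norm_num))
    exact this.congr (fun x => by ring)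
  have hnv : PF n 1 (fun x => 1 - (if x i2 then (1:ℝ) else 0)) := by
    have := ((const n 1).mono (Nat.zero_le 1)).add (((const n (-1)).mul hv).mono (by norm_num))
    exact this.congr (fun x => by ring)
  have t1 := (const n (F false false)).mul (hnu.mul hnv)
  have t2 := (const n (F true false)).mul (hu.mul hnv)
  have t3 := (const n (F false true)).mul (hnu.mul hv)
  have t4 := (const n (F true true)).mul (hu.mul hv)
  have hsum := (((t1.add t2).add t3).add t4)
  refine hsum.congr (fun x => ?_)
  cases h1 : x i1 <;> cases h2 : x i2 <;> simp <;> ring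

lemma evalComp {n d k p : ℕ} (P : MvPolynomial (Fin d) ℝ) (hP : P.totalDegree ≤ p)
    (S : Fin d → (Fin n → Bool) → ℝ) (D : (Fin n → Bool) → ℝ)
    (hS : ∀ c, PF n k (S c)) (hD : PF n k D) (hDne : ∀ x, D x ≠ 0) :
    PF n (p * k) (fun x => D x ^ p * MvPolynomial.eval (fun c => S c x / D x) P) := by
  have key : ∀ x, D x ^ p * MvPolynomial.eval (fun c => S c x / D x) P
      = ∑ m ∈ P.support, P.coeff m * ((∏ c, S c x ^ m c) * D x ^ (p - ∑ c, m c)) := by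
    intro x
    rw [MvPolynomial.eval_eq', Finset.mul_sum]
    refine Finset.sum_congr rfl fun m hm => ?_
    have hdeg : (∑ c, m c) ≤ p := by
      have h1 : m.sum (fun _ e => e) ≤ P.totalDegree := MvPolynomial.le_totalDegree hm
      have h2 : m.sum (fun _ e => e) = ∑ c, m c := Finsupp.sum_fintype _ _ (fun _ => rfl)
      omega
    have hpr : ∏ c, (S c x / D x) ^ m c = (∏ c, S c x ^ m c) / D x ^ (∑ c, m c) := by
      simp_rw [div_pow]
      rw [Finset.prod_div_distrib, Finset.prod_pow_eq_pow_sum]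
    rw [hpr]
    have hne : D x ^ (∑ c, m c) ≠ 0 := pow_ne_zero _ (hDne x)
    have hpow : D x ^ p = D x ^ (p - ∑ c, m c) * D x ^ (∑ c, m c) := by
      rw [← pow_add, Nat.sub_add_cancel hdeg]
    field_simp [hpow]
    rw [hpow]; ring
  refine (PF.sum P.support
      (fun m x => P.coeff m * ((∏ c, S c x ^ m c) * D x ^ (p - ∑ c, m c)))
      (fun m hm => ?_)).congr (fun x => (key x).symm) |>.congr (fun x => rfl)
  have hdeg : (∑ c, m c) ≤ p := by
    have h1 : m.sum (fun _ e => e) ≤ P.totalDegree := MvPolynomial.le_totalDegree hm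
    have h2 : m.sum (fun _ e => e) = ∑ c, m c := Finsupp.sum_fintype _ _ (fun _ => rfl)
    omega
  have hprod : PF n (∑ c, m c * k) (fun x => ∏ c, S c x ^ m c) :=
    prodDeg Finset.univ (fun c => m c * k) (fun c x => S c x ^ m c)
      (fun c _ => (hS c).pow (m c))
  have hDp : PF n ((p - ∑ c, m c) * k) (fun x => D x ^ (p - ∑ c, m c)) :=
    hD.pow _
  have := (const n (P.coeff m)).mul (hprod.mul hDp)
  refine this.mono (le_of_eq ?_)
  rw [zero_add, ← Finset.sum_mul, ← add_mul, Nat.add_sub_cancel' hdeg]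

end PF

lemma sum_div_prod {ι : Type*} [DecidableEq ι] (s : Finset ι) (f g : ι → ℝ) (hg : ∀ j ∈ s, g j ≠ 0) :
    ∑ j ∈ s, f j / g j = (∑ j ∈ s, f j * ∏ j' ∈ s.erase j, g j') / ∏ j ∈ s, g j := by
  rw [Finset.sum_div]
  refine Finset.sum_congr rfl fun j hj => ?_
  rw [← Finset.mul_prod_erase s g hj]
  have hne : ∏ j' ∈ s.erase j, g j' ≠ 0 :=
    Finset.prod_ne_zero_iff.mpr (fun j' hj' => hg j' (Finset.mem_of_mem_erase hj'))
  rw [mul_div_mul_right _ _ hne]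

lemma head_pf {n d : ℕ} (A : (Fin (n+1) → ℝ) → Fin d → ℝ)
    (hA : ∃ (H : Type) (_ : NormedAddCommGroup H) (_ : InnerProductSpace ℝ H)
      (q : ℝ → H) (k : Fin (n + 1) → ℝ → H) (v : Fin (n + 1) → ℝ → Fin d → ℝ),
      ∀ x j, A x j =
        (∑ i, Real.exp (inner ℝ (q (x (Fin.last n))) (k i (x i)) : ℝ) * v i (x i) j) /
        (∑ i, Real.exp (inner ℝ (q (x (Fin.last n))) (k i (x i)) : ℝ))) :
    ∃ (N : Fin d → (Fin (n+1) → Bool) → ℝ) (D : (Fin (n+1) → Bool) → ℝ),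
      (∀ c, PF (n+1) 2 (N c)) ∧ PF (n+1) 2 D ∧ (∀ x, 0 < D x) ∧
      ∀ x c, A (toReal x) c = N c x / D x := by
  obtain ⟨H, _, _, q, kf, v, hf⟩ := hA
  refine ⟨fun c x => ∑ i, Real.exp (inner ℝ (q (toReal x (Fin.last n))) (kf i (toReal x i)) : ℝ)
      * v i (toReal x i) c,
    fun x => ∑ i, Real.exp (inner ℝ (q (toReal x (Fin.last n))) (kf i (toReal x i)) : ℝ),
    ?_, ?_, ?_, ?_⟩
  · intro c
    refine PF.sum Finset.univ _ (fun i _ => ?_)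
    exact PF.two (Fin.last n) i
      (fun a b => Real.exp (inner ℝ (q (if a then 1 else 0)) (kf i (if b then 1 else 0)) : ℝ)
        * v i (if b then 1 else 0) c)
  · refine PF.sum Finset.univ _ (fun i _ => ?_)
    exact PF.two (Fin.last n) i
      (fun a b => Real.exp (inner ℝ (q (if a then 1 else 0)) (kf i (if b then 1 else 0)) : ℝ))
  · intro x
    exact Finset.sum_pos (fun i _ => Real.exp_pos _) Finset.univ_nonempty
  · intro x c
    exact hf (toReal x) c

theorem stmt_19 (n d h p : ℕ) (s : ℕ → ℕ → ℝ)
    -- every degree-`k` PTF on `n+1` bits has average sensitivity at most `s k (n+1)`: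
    (hs : ∀ (k : ℕ) (f : (Fin (n + 1) → Bool) → Prop), IsPTF k f → avgSens f ≤ s k (n + 1))
    (A : Fin h → (Fin (n + 1) → ℝ) → Fin d → ℝ)
    (hA : ∀ j, IsAttentionHead (A j))
    (P Q : MvPolynomial (Fin d) ℝ)
    (hP : P.totalDegree ≤ p) (hQ : Q.totalDegree ≤ p)
    (hQne : ∀ x ∈ cube (n + 1), MvPolynomial.eval (∑ j, A j x) Q ≠ 0)
    (T : (Fin (n + 1) → ℝ) → ℝ)
    (hT : ∀ x ∈ cube (n + 1),
      T x = MvPolynomial.eval (∑ j, A j x) P / MvPolynomial.eval (∑ j, A j x) Q) :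
    avgSens (fun x : Fin (n + 1) → Bool => 0 < T (toReal x)) ≤ s (4 * h * p) (n + 1) := by
  choose N D hN hD hDpos hAeq using fun j => head_pf (A j) (hA j)
  set Dp : (Fin (n+1) → Bool) → ℝ := fun x => ∏ j, D j x with hDpdef
  set Sc : Fin d → (Fin (n+1) → Bool) → ℝ :=
    fun c x => ∑ j, N j c x * ∏ j' ∈ Finset.univ.erase j, D j' x with hScdef
  have hDppos : ∀ x, 0 < Dp x := fun x => Finset.prod_pos (fun j _ => hDpos j x)
  have hDpne : ∀ x, Dp x ≠ 0 := fun x => ne_of_gt (hDppos x)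
  -- the sum of heads is Sc / Dp
  have hsumAD : ∀ x c, (∑ j, A j (toReal x)) c = Sc c x / Dp x := by
    intro x c
    rw [Finset.sum_apply]
    have : ∀ j ∈ (Finset.univ : Finset (Fin h)), A j (toReal x) c = N j c x / D j x :=
      fun j _ => hAeq j x c
    rw [Finset.sum_congr rfl this]
    simp only [hScdef, hDpdef]
    exact sum_div_prod Finset.univ (fun j => N j c x) (fun j => D j x)
      (fun j _ => ne_of_gt (hDpos j x))
  -- degree bounds
  have hDpPF : PF (n+1) (2*h) Dp := by
    have := PF.prodDeg (Finset.univ : Finset (Fin h)) (fun _ => 2) (fun j x => D j x)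
      (fun j _ => hD j)
    exact this.mono (by simp [Finset.sum_const, mul_comm])
  have hScPF : ∀ c, PF (n+1) (2*h) (Sc c) := by
    intro c
    refine PF.sum Finset.univ _ (fun j _ => ?_)
    have hj : 1 ≤ h := j.pos
    have hcard : (Finset.univ.erase j).card = h - 1 := by
      simp [Finset.card_erase_of_mem]
    have hprodPF : PF (n+1) ((h-1)*2) (fun x => ∏ j' ∈ Finset.univ.erase j, D j' x) := by
      refine (PF.prodDeg (Finset.univ.erase j) (fun _ => 2) (fun j' x => D j' x)
        (fun j' _ => hD j')).mono (le_of_eq ?_)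
      simp [Finset.sum_const, hcard]
    exact ((hN j c).mul hprodPF).mono (by omega)
  -- cleared-denominator versions of P and Q
  have hPt : PF (n+1) (p*(2*h))
      (fun x => Dp x ^ p * MvPolynomial.eval (fun c => Sc c x / Dp x) P) :=
    PF.evalComp P hP Sc Dp hScPF hDpPF hDpne
  have hQt : PF (n+1) (p*(2*h))
      (fun x => Dp x ^ p * MvPolynomial.eval (fun c => Sc c x / Dp x) Q) :=
    PF.evalComp Q hQ Sc Dp hScPF hDpPF hDpne
  have hmul := (hPt.mul hQt).mono (le_of_eq (by ring) : p*(2*h) + p*(2*h) ≤ 4*h*p)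
  obtain ⟨R, hRdeg, hReval⟩ := hmul
  refine hs (4*h*p) _ ⟨R, hRdeg, fun x => ?_⟩
  have hcube : toReal x ∈ cube (n+1) := fun i => by
    by_cases hx : x i <;> simp [toReal, hx]
  have hpt : (fun c => Sc c x / Dp x) = (∑ j, A j (toReal x)) := by
    funext c; rw [hsumAD x c]
  show (0 < T (toReal x)) ↔ 0 < MvPolynomial.eval (toReal x) R
  have hRe := hReval x
  simp only [hpt] at hRe
  rw [hT _ hcube, ← hRe]
  set a := MvPolynomial.eval (∑ j, A j (toReal x)) P with ha
  set b := MvPolynomial.eval (∑ j, A j (toReal x)) Q with hb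
  have hk : (0:ℝ) < Dp x ^ p * Dp x ^ p := mul_pos (pow_pos (hDppos x) p) (pow_pos (hDppos x) p)
  have hre : Dp x ^ p * a * (Dp x ^ p * b) = (Dp x ^ p * Dp x ^ p) * (a * b) := by ring
  rw [hre, mul_pos_iff_of_pos_left hk, div_pos_iff, mul_pos_iff]
end
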